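/- Let ρ be a critical radius function on ℝ^d and c₁, c₂ > 0 with c₁ > 2c₂. Then the uncentered exponential Hardy–Littlewood operator with rate c₁ is pointwise dominated by a constant times the centered one with rate c₂: for all f ∈ L¹_loc(ℝ^d) and x ∈ ℝ^d, ℳ_{ρ,c₁} f(x) ≤ C M_{ρ,c₂} f(x), where the constant C depends only on the critical radius constants. -/

import Mathlib

open MeasureTheory Metric Set

noncomputable section

/-- A critical radius function with constants `B₀, k₀`. -/
def IsCRF {d : ℕ} (ρ : EuclideanSpace ℝ (Fin d) → ℝ) (B₀ k₀ : ℝ) : Prop :=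
  (∀ x, 0 < ρ x) ∧ ∀ x y : EuclideanSpace ℝ (Fin d),
    B₀⁻¹ * ρ x * (1 + dist x y / ρ x) ^ (-k₀) ≤ ρ y ∧
    ρ y ≤ B₀ * ρ x * (1 + dist x y / ρ x) ^ (k₀ / (k₀ + 1))

/-- The Agmon distance associated to `ρ`. -/
def agmonDist {d : ℕ} (ρ : EuclideanSpace ℝ (Fin d) → ℝ)
    (x y : EuclideanSpace ℝ (Fin d)) : ℝ :=
  sInf { L : ℝ | ∃ γ : ℝ → EuclideanSpace ℝ (Fin d), ContDiff ℝ 1 γ ∧ γ 0 = x ∧ γ 1 = y ∧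
    L = ∫ t in (0:ℝ)..1, (ρ (γ t))⁻¹ * ‖deriv γ t‖ }

/-- The Agmon ball `B_ρ(x,r)`. -/
def agmonBall {d : ℕ} (ρ : EuclideanSpace ℝ (Fin d) → ℝ)
    (x : EuclideanSpace ℝ (Fin d)) (r : ℝ) : Set (EuclideanSpace ℝ (Fin d)) :=
  { y | agmonDist ρ x y < r }

open scoped ENNReal

/-- Centered exponential Hardy–Littlewood maximal operator `M_{ρ,c}`. -/
def aMax {d : ℕ} (ρ : EuclideanSpace ℝ (Fin d) → ℝ) (c : ℝ)
    (f : EuclideanSpace ℝ (Fin d) → ℝ) (x : EuclideanSpace ℝ (Fin d)) : ℝ≥0∞ :=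
  ⨆ (t : ℝ) (_ : 0 < t),
    (∫⁻ y in agmonBall ρ x t, ENNReal.ofReal |f y|) /
      (volume (agmonBall ρ x t) * ENNReal.ofReal (Real.exp (c * t)))

/-- Uncentered exponential Hardy–Littlewood maximal operator `ℳ_{ρ,c}`. -/
def aMaxUnc {d : ℕ} (ρ : EuclideanSpace ℝ (Fin d) → ℝ) (c : ℝ)
    (f : EuclideanSpace ℝ (Fin d) → ℝ) (x : EuclideanSpace ℝ (Fin d)) : ℝ≥0∞ :=
  ⨆ (z : EuclideanSpace ℝ (Fin d)) (r : ℝ) (_ : 0 < r) (_ : agmonDist ρ z x < r),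
    (∫⁻ y in agmonBall ρ z r, ENNReal.ofReal |f y|) /
      (volume (agmonBall ρ z r) * ENNReal.ofReal (Real.exp (c * r)))


def pSet {d : ℕ} (ρ : EuclideanSpace ℝ (Fin d) → ℝ)
    (x y : EuclideanSpace ℝ (Fin d)) : Set ℝ :=
  { L : ℝ | ∃ γ : ℝ → EuclideanSpace ℝ (Fin d), ContDiff ℝ 1 γ ∧ γ 0 = x ∧ γ 1 = y ∧
    L = ∫ t in (0:ℝ)..1, (ρ (γ t))⁻¹ * ‖deriv γ t‖ }

variable {d : ℕ} {ρ : EuclideanSpace ℝ (Fin d) → ℝ}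

lemma line_contDiff (x v : EuclideanSpace ℝ (Fin d)) :
    ContDiff ℝ 1 (fun t : ℝ => x + t • v) :=
  contDiff_const.add (contDiff_id.smul contDiff_const)

lemma line_deriv (x v : EuclideanSpace ℝ (Fin d)) (t : ℝ) :
    deriv (fun t : ℝ => x + t • v) t = v := by
  have h : HasDerivAt (fun t : ℝ => x + t • v) ((1:ℝ) • v) t :=
    (HasDerivAt.smul_const (hasDerivAt_id t) v).const_add x
  simpa using h.deriv

lemma pSet_nonempty (x y : EuclideanSpace ℝ (Fin d)) : (pSet ρ x y).Nonempty := by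
  refine ⟨_, fun t : ℝ => x + t • (y - x), line_contDiff x (y - x), by simp, by simp, rfl⟩

lemma pSet_nonneg (hpos : ∀ x, 0 < ρ x) {x y : EuclideanSpace ℝ (Fin d)}
    {L : ℝ} (hL : L ∈ pSet ρ x y) : 0 ≤ L := by
  obtain ⟨γ, hγ, h0, h1, rfl⟩ := hL
  refine intervalIntegral.integral_nonneg zero_le_one fun u _ => ?_
  have := (hpos (γ u)).le
  positivity

lemma pSet_bddBelow (hpos : ∀ x, 0 < ρ x) (x y : EuclideanSpace ℝ (Fin d)) :
    BddBelow (pSet ρ x y) :=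
  ⟨0, fun _ hL => pSet_nonneg hpos hL⟩

lemma agmonDist_eq (x y : EuclideanSpace ℝ (Fin d)) :
    agmonDist ρ x y = sInf (pSet ρ x y) := rfl

lemma agmonDist_nonneg (hpos : ∀ x, 0 < ρ x) (x y : EuclideanSpace ℝ (Fin d)) :
    0 ≤ agmonDist ρ x y :=
  le_csInf (pSet_nonempty x y) fun _ hL => pSet_nonneg hpos hL

lemma agmonDist_le (hpos : ∀ x, 0 < ρ x) {x y : EuclideanSpace ℝ (Fin d)}
    {L : ℝ} (hL : L ∈ pSet ρ x y) : agmonDist ρ x y ≤ L :=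
  csInf_le (pSet_bddBelow hpos x y) hL

lemma pSet_symm_subset (x y : EuclideanSpace ℝ (Fin d)) : pSet ρ x y ⊆ pSet ρ y x := by
  rintro L ⟨γ, hγ, h0, h1, rfl⟩
  refine ⟨fun t => γ (1 - t), hγ.comp (contDiff_const.sub contDiff_id), by simpa, by simpa, ?_⟩
  have hd : ∀ t : ℝ, deriv (fun t => γ (1 - t)) t = (-1 : ℝ) • deriv γ (1 - t) := by
    intro t
    have hγd : HasDerivAt γ (deriv γ (1 - t)) (1 - t) :=
      ((hγ.differentiable one_ne_zero) (1 - t)).hasDerivAt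
    have hin : HasDerivAt (fun t : ℝ => 1 - t) (-1 : ℝ) t := by
      simpa using (hasDerivAt_id t).const_sub 1
    exact (HasDerivAt.scomp t hγd hin).deriv
  have : (∫ t in (0:ℝ)..1, (ρ (γ (1 - t)))⁻¹ * ‖deriv (fun t => γ (1 - t)) t‖)
      = ∫ t in (0:ℝ)..1, (ρ (γ (1 - t)))⁻¹ * ‖deriv γ (1 - t)‖ := by
    apply intervalIntegral.integral_congr
    intro t _
    dsimp only
    rw [hd t, norm_smul]
    simp
  rw [this]
  have h2 := intervalIntegral.integral_comp_sub_left (a := (0:ℝ)) (b := (1:ℝ))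
    (fun u => (ρ (γ u))⁻¹ * ‖deriv γ u‖) (1 : ℝ)
  rw [show (1:ℝ) - 1 = 0 by norm_num, show (1:ℝ) - 0 = 1 by norm_num] at h2
  exact h2.symm

lemma agmonDist_symm (x y : EuclideanSpace ℝ (Fin d)) :
    agmonDist ρ x y = agmonDist ρ y x := by
  rw [agmonDist_eq, agmonDist_eq,
    le_antisymm (pSet_symm_subset x y) (pSet_symm_subset y x)]


def phi (t : ℝ) : ℝ := t ^ 2 * (3 - 2 * t)

def phid (t : ℝ) : ℝ := 6 * t - 6 * t ^ 2

lemma hasDerivAt_phi (t : ℝ) : HasDerivAt phi (phid t) t := by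
  have h : HasDerivAt (fun t : ℝ => t ^ 2 * (3 - 2 * t))
      ((2 * t ^ 1) * (3 - 2 * t) + t ^ 2 * (0 - 2 * 1)) t := by
    exact (hasDerivAt_pow 2 t).mul ((hasDerivAt_const t 3).sub ((hasDerivAt_id t).const_mul 2))
  convert h using 1
  · rfl
  · unfold phid; ring

lemma deriv_phi : deriv phi = phid := funext fun t => (hasDerivAt_phi t).deriv

lemma phi_contDiff : ContDiff ℝ 1 phi := by
  unfold phi; fun_prop

lemma phi_zero : phi 0 = 0 := by simp [phi]

lemma phi_one : phi 1 = 1 := by norm_num [phi]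

lemma phid_zero : phid 0 = 0 := by simp [phid]

lemma phid_one : phid 1 = 0 := by norm_num [phid]

lemma phid_nonneg {t : ℝ} (h0 : 0 ≤ t) (h1 : t ≤ 1) : 0 ≤ phid t := by
  have : phid t = 6 * (t * (1 - t)) := by unfold phid; ring
  rw [this]; nlinarith

lemma phi_strictMonoOn : StrictMonoOn phi (Icc 0 1) := by
  apply strictMonoOn_of_deriv_pos (convex_Icc 0 1) (phi_contDiff.continuous.continuousOn)
  intro t ht
  rw [interior_Icc] at ht
  rw [deriv_phi]
  have : phid t = 6 * (t * (1 - t)) := by unfold phid; ring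
  rw [this]
  nlinarith [ht.1, ht.2]

lemma phi_mem_Icc {t : ℝ} (h : t ∈ Icc (0:ℝ) 1) : phi t ∈ Icc (0:ℝ) 1 := by
  constructor
  · have := phi_strictMonoOn.monotoneOn (left_mem_Icc.2 zero_le_one) h h.1
    simpa [phi_zero] using this
  · have := phi_strictMonoOn.monotoneOn h (right_mem_Icc.2 zero_le_one) h.2
    simpa [phi_one] using this

lemma phi_image_Ioo : phi '' Ioo 0 1 = Ioo 0 1 := by
  apply Subset.antisymm
  · rintro u ⟨t, ht, rfl⟩
    constructor
    · have := phi_strictMonoOn (left_mem_Icc.2 zero_le_one) (Ioo_subset_Icc_self ht) ht.1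
      simpa [phi_zero] using this
    · have := phi_strictMonoOn (Ioo_subset_Icc_self ht) (right_mem_Icc.2 zero_le_one) ht.2
      simpa [phi_one] using this
  · intro u hu
    have hsub : Icc (phi 0) (phi 1) ⊆ phi '' Icc 0 1 :=
      intermediate_value_Icc zero_le_one phi_contDiff.continuous.continuousOn
    have : u ∈ phi '' Icc 0 1 := by
      apply hsub; rw [phi_zero, phi_one]; exact Ioo_subset_Icc_self hu
    obtain ⟨t, ht, rfl⟩ := this
    refine ⟨t, ?_, rfl⟩
    rcases eq_or_lt_of_le ht.1 with h | h
    · exfalso; rw [← h, phi_zero] at hu; exact lt_irrefl _ hu.1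
    rcases eq_or_lt_of_le ht.2 with h2 | h2
    · exfalso; rw [h2, phi_one] at hu; exact lt_irrefl _ hu.2
    exact ⟨h, h2⟩

lemma key_cov (F : ℝ → ℝ) :
    ∫ s in (0:ℝ)..1, phid s * F (phi s) = ∫ s in (0:ℝ)..1, F s := by
  have hderiv : ∀ s ∈ Ioo (0:ℝ) 1, HasDerivWithinAt phi (phid s) (Ioo 0 1) s :=
    fun s _ => (hasDerivAt_phi s).hasDerivWithinAt
  have hinj : InjOn phi (Ioo 0 1) := phi_strictMonoOn.injOn.mono Ioo_subset_Icc_self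
  have h := integral_image_eq_integral_abs_deriv_smul measurableSet_Ioo hderiv hinj F
  rw [phi_image_Ioo] at h
  rw [intervalIntegral.integral_of_le zero_le_one, intervalIntegral.integral_of_le zero_le_one,
    integral_Ioc_eq_integral_Ioo, integral_Ioc_eq_integral_Ioo, h]
  apply setIntegral_congr_fun measurableSet_Ioo
  intro s hs
  dsimp only
  rw [abs_of_nonneg (phid_nonneg hs.1.le hs.2.le), smul_eq_mul]
lemma concat (hpos : ∀ x, 0 < ρ x) {x z y : EuclideanSpace ℝ (Fin d)}
    {γ₁ γ₂ : ℝ → EuclideanSpace ℝ (Fin d)}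
    (hγ₁ : ContDiff ℝ 1 γ₁) (ha0 : γ₁ 0 = x) (ha1 : γ₁ 1 = z)
    (hγ₂ : ContDiff ℝ 1 γ₂) (hb0 : γ₂ 0 = z) (hb1 : γ₂ 1 = y) :
    ∃ L ∈ pSet ρ x y,
      L ≤ (∫ t in (0:ℝ)..1, (ρ (γ₁ t))⁻¹ * ‖deriv γ₁ t‖) +
          ∫ t in (0:ℝ)..1, (ρ (γ₂ t))⁻¹ * ‖deriv γ₂ t‖ := by
  set σ : ℝ → EuclideanSpace ℝ (Fin d) :=
    fun t => if t ≤ 1/2 then γ₁ (phi (2*t)) else γ₂ (phi (2*t - 1)) with hσdef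
  set D : ℝ → EuclideanSpace ℝ (Fin d) :=
    fun t => if t ≤ 1/2 then (2 * phid (2*t)) • deriv γ₁ (phi (2*t))
      else (2 * phid (2*t - 1)) • deriv γ₂ (phi (2*t - 1)) with hDdef
  have hg1 : ∀ t : ℝ, HasDerivAt (fun u => γ₁ (phi (2*u)))
      ((2 * phid (2*t)) • deriv γ₁ (phi (2*t))) t := by
    intro t
    have hin : HasDerivAt (fun u : ℝ => phi (2*u)) (phid (2*t) * 2) t :=
      HasDerivAt.comp t (hasDerivAt_phi (2*t)) (by simpa using (hasDerivAt_id t).const_mul 2)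
    have hout : HasDerivAt γ₁ (deriv γ₁ (phi (2*t))) (phi (2*t)) :=
      ((hγ₁.differentiable one_ne_zero) _).hasDerivAt
    have := HasDerivAt.scomp t hout hin
    simpa [mul_comm, Function.comp_def] using this
  have hg2 : ∀ t : ℝ, HasDerivAt (fun u => γ₂ (phi (2*u - 1)))
      ((2 * phid (2*t - 1)) • deriv γ₂ (phi (2*t - 1))) t := by
    intro t
    have hin : HasDerivAt (fun u : ℝ => phi (2*u - 1)) (phid (2*t - 1) * 2) t := by
      have h2 : HasDerivAt (fun u : ℝ => 2*u - 1) (2:ℝ) t := by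
        simpa using ((hasDerivAt_id t).const_mul 2).sub_const 1
      exact HasDerivAt.comp t (hasDerivAt_phi (2*t - 1)) h2
    have hout : HasDerivAt γ₂ (deriv γ₂ (phi (2*t - 1))) (phi (2*t - 1)) :=
      ((hγ₂.differentiable one_ne_zero) _).hasDerivAt
    have := HasDerivAt.scomp t hout hin
    simpa [mul_comm, Function.comp_def] using this
  have hσ0 : σ 0 = x := by
    simp only [hσdef]
    rw [if_pos (by norm_num : (0:ℝ) ≤ 1/2)]
    simpa [phi_zero] using ha0
  have hσ1 : σ 1 = y := by
    simp only [hσdef]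
    rw [if_neg (by norm_num : ¬ (1:ℝ) ≤ 1/2)]
    norm_num [phi_one, hb1]
  have hσhalf : σ (1/2) = z := by
    simp only [hσdef]
    rw [if_pos le_rfl]
    norm_num [phi_one, ha1]
  have hσD : ∀ t, HasDerivAt σ (D t) t := by
    intro t
    rcases lt_trichotomy t (1/2) with h | h | h
    · simp only [hDdef]
      rw [if_pos h.le]
      apply (hg1 t).congr_of_eventuallyEq
      filter_upwards [Iio_mem_nhds h] with u hu
      simp only [hσdef]
      rw [if_pos (le_of_lt hu)]
    · subst h
      have hD0 : D (1/2) = 0 := by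
        simp only [hDdef]
        rw [if_pos le_rfl]
        norm_num [phid]
      rw [hD0]
      have e1 : (2 * phid (2*(1/2:ℝ))) • deriv γ₁ (phi (2*(1/2:ℝ))) = 0 := by
        norm_num [phid]
      have e2 : (2 * phid (2*(1/2:ℝ) - 1)) • deriv γ₂ (phi (2*(1/2:ℝ) - 1)) = 0 := by
        norm_num [phid]
      have hl : HasDerivWithinAt σ 0 (Iic (1/2)) (1/2) := by
        have h1 := ((hg1 (1/2)).hasDerivWithinAt (s := Iic (1/2)))
        rw [e1] at h1
        apply h1.congr
        · intro u hu
          simp only [hσdef]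
          rw [if_pos (mem_Iic.mp hu)]
        · simp only [hσdef]
          rw [if_pos le_rfl]
      have hr : HasDerivWithinAt σ 0 (Ici (1/2)) (1/2) := by
        have h2 := ((hg2 (1/2)).hasDerivWithinAt (s := Ici (1/2)))
        rw [e2] at h2
        apply h2.congr
        · intro u hu
          rcases eq_or_lt_of_le (mem_Ici.mp hu) with he | he
          · rw [← he, hσhalf]
            norm_num [phi_zero, hb0]
          · simp only [hσdef]
            rw [if_neg (not_le.2 he)]
        · rw [hσhalf]
          norm_num [phi_zero, hb0]
      have := hl.union hr
      rw [Iic_union_Ici] at this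
      exact this.hasDerivAt (by simp)
    · simp only [hDdef]
      rw [if_neg (not_le.2 h)]
      apply (hg2 t).congr_of_eventuallyEq
      filter_upwards [Ioi_mem_nhds h] with u hu
      simp only [hσdef]
      rw [if_neg (not_le.2 hu)]
  have hDcont : Continuous D := by
    have hphid : Continuous phid := by unfold phid; fun_prop
    have hphi : Continuous phi := by unfold phi; fun_prop
    have hc1 : Continuous fun t : ℝ => (2 * phid (2*t)) • deriv γ₁ (phi (2*t)) := by
      exact (continuous_const.mul (hphid.comp (by fun_prop))).smul
        ((hγ₁.continuous_deriv le_rfl).comp (hphi.comp (by fun_prop)))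
    have hc2 : Continuous fun t : ℝ => (2 * phid (2*t - 1)) • deriv γ₂ (phi (2*t - 1)) := by
      exact (continuous_const.mul (hphid.comp (by fun_prop))).smul
        ((hγ₂.continuous_deriv le_rfl).comp (hphi.comp (by fun_prop)))
    exact hc1.if_le hc2 continuous_id continuous_const
      (by intro u hu; subst hu; norm_num [phid])
  have hσc : ContDiff ℝ 1 σ := by
    rw [contDiff_one_iff_deriv]
    refine ⟨fun t => (hσD t).differentiableAt, ?_⟩
    have : deriv σ = D := funext fun t => (hσD t).deriv
    rw [this]
    exact hDcont
  refine ⟨_, ⟨σ, hσc, hσ0, hσ1, rfl⟩, ?_⟩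
  -- now the estimate
  set F₁ : ℝ → ℝ := fun u => (ρ (γ₁ u))⁻¹ * ‖deriv γ₁ u‖ with hF₁
  set F₂ : ℝ → ℝ := fun u => (ρ (γ₂ u))⁻¹ * ‖deriv γ₂ u‖ with hF₂
  set G : ℝ → ℝ := fun t => (ρ (σ t))⁻¹ * ‖D t‖ with hG
  have hGeq : (fun t => (ρ (σ t))⁻¹ * ‖deriv σ t‖) = G := by
    funext t; rw [hG]; rw [(hσD t).deriv]
  have hL1nn : 0 ≤ ∫ t in (0:ℝ)..1, F₁ t :=
    intervalIntegral.integral_nonneg zero_le_one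
      (fun u _ => mul_nonneg (inv_nonneg.2 (hpos _).le) (norm_nonneg _))
  have hL2nn : 0 ≤ ∫ t in (0:ℝ)..1, F₂ t :=
    intervalIntegral.integral_nonneg zero_le_one
      (fun u _ => mul_nonneg (inv_nonneg.2 (hpos _).le) (norm_nonneg _))
  rw [hGeq]
  by_cases hInt : IntervalIntegrable G volume 0 1
  · have hs1 : IntervalIntegrable G volume 0 (1/2) := by
      apply hInt.mono_set
      rw [uIcc_of_le (by norm_num : (0:ℝ) ≤ 1/2), uIcc_of_le zero_le_one]
      exact Icc_subset_Icc le_rfl (by norm_num)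
    have hs2 : IntervalIntegrable G volume (1/2) 1 := by
      apply hInt.mono_set
      rw [uIcc_of_le (by norm_num : (1/2:ℝ) ≤ 1), uIcc_of_le zero_le_one]
      exact Icc_subset_Icc (by norm_num) le_rfl
    have hsplit : (∫ t in (0:ℝ)..1, G t) =
        (∫ t in (0:ℝ)..(1/2:ℝ), G t) + ∫ t in (1/2:ℝ)..(1:ℝ), G t :=
      (intervalIntegral.integral_add_adjacent_intervals hs1 hs2).symm
    have hhalf1 : (∫ t in (0:ℝ)..(1/2:ℝ), G t) = ∫ t in (0:ℝ)..1, F₁ t := by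
      have he : EqOn G (fun t => 2 * (phid (2*t) * F₁ (phi (2*t)))) (uIcc 0 (1/2)) := by
        intro t ht
        rw [uIcc_of_le (by norm_num : (0:ℝ) ≤ 1/2)] at ht
        have ht2 : t ≤ 1/2 := ht.2
        have h2t : (0:ℝ) ≤ 2*t := by linarith [ht.1]
        have h2t' : 2*t ≤ 1 := by linarith
        simp only [hG, hσdef, hDdef]
        rw [if_pos ht2, if_pos ht2, norm_smul, Real.norm_eq_abs,
          abs_of_nonneg (by have := phid_nonneg h2t h2t'; linarith : (0:ℝ) ≤ 2 * phid (2*t))]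
        rw [hF₁]; ring
      rw [intervalIntegral.integral_congr he]
      rw [intervalIntegral.integral_const_mul]
      have := intervalIntegral.integral_comp_mul_left
        (a := (0:ℝ)) (b := (1/2:ℝ)) (fun s => phid s * F₁ (phi s)) (c := (2:ℝ)) two_ne_zero
      norm_num at this
      rw [this]
      linarith [key_cov F₁]
    have hhalf2 : (∫ t in (1/2:ℝ)..(1:ℝ), G t) = ∫ t in (0:ℝ)..1, F₂ t := by
      have he : EqOn G (fun t => 2 * (phid (2*t - 1) * F₂ (phi (2*t - 1)))) (uIcc (1/2) 1) := by
        intro t ht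
        rw [uIcc_of_le (by norm_num : (1/2:ℝ) ≤ 1)] at ht
        have h2t : (0:ℝ) ≤ 2*t - 1 := by linarith [ht.1]
        have h2t' : 2*t - 1 ≤ 1 := by linarith [ht.2]
        rcases eq_or_lt_of_le ht.1 with he2 | he2
        · have : t = 1/2 := he2.symm
          subst this
          simp only [hG, hσdef, hDdef]
          rw [if_pos le_rfl, if_pos le_rfl]
          norm_num [phid]
        · simp only [hG, hσdef, hDdef]
          rw [if_neg (not_le.2 he2), if_neg (not_le.2 he2), norm_smul, Real.norm_eq_abs,
            abs_of_nonneg (by have := phid_nonneg h2t h2t'; linarith : (0:ℝ) ≤ 2 * phid (2*t - 1))]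
          rw [hF₂]; ring
      rw [intervalIntegral.integral_congr he]
      rw [intervalIntegral.integral_const_mul]
      have h1 := intervalIntegral.integral_comp_mul_left
        (a := (1/2:ℝ)) (b := (1:ℝ)) (fun u => phid (u - 1) * F₂ (phi (u - 1))) (c := (2:ℝ))
        two_ne_zero
      norm_num at h1
      rw [h1]
      have h2 := intervalIntegral.integral_comp_sub_right
        (a := (1:ℝ)) (b := (2:ℝ)) (fun s => phid s * F₂ (phi s)) (1:ℝ)
      norm_num at h2
      rw [h2]
      linarith [key_cov F₂]
    rw [hsplit, hhalf1, hhalf2]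
  · rw [intervalIntegral.integral_undef hInt]
    positivity
lemma agmonDist_triangle (hpos : ∀ x, 0 < ρ x) (x z y : EuclideanSpace ℝ (Fin d)) :
    agmonDist ρ x y ≤ agmonDist ρ x z + agmonDist ρ z y := by
  have key : ∀ L₁ ∈ pSet ρ x z, ∀ L₂ ∈ pSet ρ z y, agmonDist ρ x y ≤ L₁ + L₂ := by
    rintro L₁ ⟨γ₁, hγ₁, a0, a1, rfl⟩ L₂ ⟨γ₂, hγ₂, b0, b1, rfl⟩
    obtain ⟨L, hLmem, hLle⟩ := concat hpos hγ₁ a0 a1 hγ₂ b0 b1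
    exact (agmonDist_le hpos hLmem).trans hLle
  have h1 : ∀ L₁ ∈ pSet ρ x z, agmonDist ρ x y - L₁ ≤ agmonDist ρ z y := fun L₁ h =>
    le_csInf (pSet_nonempty z y) fun L₂ h₂ => by linarith [key L₁ h L₂ h₂]
  have h2 : agmonDist ρ x y - agmonDist ρ z y ≤ agmonDist ρ x z :=
    le_csInf (pSet_nonempty x z) fun L₁ h => by linarith [h1 L₁ h]
  linarith

lemma ball_subset_double (hpos : ∀ x, 0 < ρ x) {z x : EuclideanSpace ℝ (Fin d)} {r : ℝ}
    (hzx : agmonDist ρ z x < r) :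
    agmonBall ρ z r ⊆ agmonBall ρ x (2 * r) := by
  intro y hy
  have h1 : agmonDist ρ x y ≤ agmonDist ρ x z + agmonDist ρ z y := agmonDist_triangle hpos x z y
  have h2 : agmonDist ρ x z = agmonDist ρ z x := agmonDist_symm x z
  have : agmonDist ρ z y < r := hy
  simp only [agmonBall, mem_setOf_eq]
  linarith

lemma double_subset_triple (hpos : ∀ x, 0 < ρ x) {z x : EuclideanSpace ℝ (Fin d)} {r : ℝ}
    (hzx : agmonDist ρ z x < r) :
    agmonBall ρ x (2 * r) ⊆ agmonBall ρ z (3 * r) := by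
  intro y hy
  have h1 : agmonDist ρ z y ≤ agmonDist ρ z x + agmonDist ρ x y := agmonDist_triangle hpos z x y
  have : agmonDist ρ x y < 2 * r := hy
  simp only [agmonBall, mem_setOf_eq]
  linarith
lemma eucBall_subset_agmonBall {B₀ k₀ : ℝ} (hB₀ : 1 < B₀) (hk₀ : 1 < k₀)
    (hρ : IsCRF ρ B₀ k₀) {z : EuclideanSpace ℝ (Fin d)} {r : ℝ} (hr : 0 < r) :
    closedBall z (min 1 (r / ((2:ℝ) ^ (k₀+1) * B₀)) * ρ z) ⊆ agmonBall ρ z r := by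
  have hpos := hρ.1
  set δ : ℝ := min 1 (r / ((2:ℝ) ^ (k₀+1) * B₀)) with hδ
  have h2pow : (0:ℝ) < (2:ℝ) ^ (k₀+1) := Real.rpow_pos_of_pos two_pos _
  have hδpos : 0 < δ := lt_min one_pos (by positivity)
  intro y hy
  have hyz : ‖y - z‖ ≤ δ * ρ z := by
    rw [← dist_eq_norm]; exact mem_closedBall.mp hy
  set γ : ℝ → EuclideanSpace ℝ (Fin d) := fun t => z + t • (y - z) with hγdef
  set g : ℝ → ℝ := fun t => (ρ (γ t))⁻¹ * ‖deriv γ t‖ with hg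
  have hmem : (∫ t in (0:ℝ)..1, g t) ∈ pSet ρ z y :=
    ⟨γ, line_contDiff z (y - z), by simp [hγdef], by simp [hγdef], rfl⟩
  have hpt : ∀ t ∈ Icc (0:ℝ) 1, g t ≤ r / 2 := by
    intro t ht
    have hdist : dist z (γ t) ≤ δ * ρ z := by
      have : dist z (γ t) = ‖t • (y - z)‖ := by
        rw [dist_eq_norm, hγdef]; simp [norm_neg]
      rw [this, norm_smul, Real.norm_eq_abs, abs_of_nonneg ht.1]
      calc t * ‖y - z‖ ≤ 1 * ‖y - z‖ :=
            mul_le_mul_of_nonneg_right ht.2 (norm_nonneg _)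
        _ ≤ δ * ρ z := by rw [one_mul]; exact hyz
    have hlow := (hρ.2 z (γ t)).1
    have hu0 : 0 ≤ dist z (γ t) / ρ z := div_nonneg dist_nonneg (hpos z).le
    have hu1 : dist z (γ t) / ρ z ≤ 1 := by
      rw [div_le_one (hpos z)]
      calc dist z (γ t) ≤ δ * ρ z := hdist
        _ ≤ 1 * ρ z := mul_le_mul_of_nonneg_right (min_le_left _ _) (hpos z).le
        _ = ρ z := one_mul _
    have hrp : ((2:ℝ)) ^ (-k₀) ≤ (1 + dist z (γ t) / ρ z) ^ (-k₀) := by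
      rw [show ((2:ℝ)) ^ (-k₀) = (((2:ℝ)) ^ k₀)⁻¹ from Real.rpow_neg (by norm_num) _,
        show (1 + dist z (γ t) / ρ z) ^ (-k₀) = ((1 + dist z (γ t) / ρ z) ^ k₀)⁻¹ from
          Real.rpow_neg (by linarith) _]
      exact inv_anti₀ (Real.rpow_pos_of_pos (by linarith) _)
        (Real.rpow_le_rpow (by linarith) (by linarith) (by linarith))
    have hm : B₀⁻¹ * ρ z * (2:ℝ) ^ (-k₀) ≤ ρ (γ t) := by
      refine le_trans ?_ hlow
      exact mul_le_mul_of_nonneg_left hrp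
        (mul_pos (inv_pos.2 (by linarith : (0:ℝ) < B₀)) (hpos z)).le
    have hmpos : (0:ℝ) < B₀⁻¹ * ρ z * (2:ℝ) ^ (-k₀) :=
      mul_pos (mul_pos (inv_pos.2 (by linarith : (0:ℝ) < B₀)) (hpos z))
        (Real.rpow_pos_of_pos two_pos _)
    have hder : ‖deriv γ t‖ = ‖y - z‖ := by rw [hγdef, line_deriv]
    have hginv : (ρ (γ t))⁻¹ ≤ (B₀⁻¹ * ρ z * (2:ℝ) ^ (-k₀))⁻¹ :=
      inv_anti₀ hmpos hm
    have : g t ≤ (B₀⁻¹ * ρ z * (2:ℝ) ^ (-k₀))⁻¹ * (δ * ρ z) := by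
      rw [hg]
      dsimp only
      rw [hder]
      exact mul_le_mul hginv hyz (norm_nonneg _) (inv_nonneg.2 hmpos.le)
    refine this.trans ?_
    have hexp : ((2:ℝ)) ^ (-k₀) = ((2:ℝ) ^ k₀)⁻¹ := by
      rw [Real.rpow_neg two_pos.le]
    have h2k : (0:ℝ) < (2:ℝ) ^ k₀ := Real.rpow_pos_of_pos two_pos _
    have hδle : δ ≤ r / ((2:ℝ) ^ (k₀+1) * B₀) := min_le_right _ _
    have h21 : (2:ℝ) ^ (k₀+1) = (2:ℝ) ^ k₀ * 2 := by
      rw [Real.rpow_add two_pos, Real.rpow_one]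
    have hB0 : (0:ℝ) < B₀ := by linarith
    rw [hexp]
    have key : (B₀⁻¹ * ρ z * ((2:ℝ) ^ k₀)⁻¹)⁻¹ * (δ * ρ z) = B₀ * (2:ℝ) ^ k₀ * δ := by
      field_simp [(hpos z).ne']
    rw [key]
    calc B₀ * (2:ℝ) ^ k₀ * δ ≤ B₀ * (2:ℝ) ^ k₀ * (r / ((2:ℝ) ^ (k₀+1) * B₀)) := by
          apply mul_le_mul_of_nonneg_left hδle (by positivity)
      _ = r / 2 := by rw [h21]; field_simp
  have hfin : agmonDist ρ z y ≤ r / 2 := by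
    by_cases hInt : IntervalIntegrable g volume 0 1
    · refine (agmonDist_le hpos hmem).trans ?_
      calc (∫ t in (0:ℝ)..1, g t) ≤ ∫ _t in (0:ℝ)..1, (r/2) :=
            intervalIntegral.integral_mono_on zero_le_one hInt intervalIntegrable_const hpt
        _ = r / 2 := by simp
    · have h0 : (∫ t in (0:ℝ)..1, g t) = 0 := intervalIntegral.integral_undef hInt
      have := agmonDist_le hpos hmem
      rw [h0] at this
      linarith
  show agmonDist ρ z y < r
  linarith

lemma exit_bound {B₀ k₀ : ℝ} (hB₀ : 1 < B₀) (hk₀ : 1 < k₀)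
    (hρ : IsCRF ρ B₀ k₀) {z y : EuclideanSpace ℝ (Fin d)} {s : ℝ} (hs : 0 < s)
    (h : agmonDist ρ z y < s) :
    agmonDist ρ z y ≤ 0 ∨ dist y z ≤ ((1 + 2*B₀*s) ^ (k₀+1) - 1) * ρ z := by
  have hpos := hρ.1
  obtain ⟨L, hLmem, hLs⟩ := exists_lt_of_csInf_lt (pSet_nonempty z y) h
  obtain ⟨γ, hγ, h0, h1, rfl⟩ := hLmem
  set g : ℝ → ℝ := fun t => (ρ (γ t))⁻¹ * ‖deriv γ t‖ with hgdef
  by_cases hInt : IntervalIntegrable g volume 0 1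
  · right
    set a : ℝ := 2*B₀*s with ha
    have hapos : 0 < a := by have : (1:ℝ) < B₀ := hB₀; positivity
    set R : ℝ := (1 + a) ^ (k₀+1) - 1 with hR
    have h1a : (0:ℝ) < 1 + a := by linarith
    have hRpos : 0 < R := by
      have : (1:ℝ) ^ (k₀+1) < (1+a) ^ (k₀+1) :=
        Real.rpow_lt_rpow zero_le_one (by linarith) (by linarith)
      rw [Real.one_rpow] at this
      simp only [hR]; linarith
    by_contra hcon
    push_neg at hcon
    set θ : ℝ := k₀ / (k₀ + 1) with hθ
    have hθ0 : 0 ≤ θ := by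
      apply div_nonneg <;> linarith
    -- key algebraic fact : R ≥ (1+R)^θ * a
    have h1R : 1 + R = (1+a) ^ (k₀+1) := by rw [hR]; ring
    have hpowθ : (1 + R) ^ θ = (1+a) ^ k₀ := by
      rw [h1R, ← Real.rpow_mul h1a.le]
      congr 1
      rw [hθ]
      field_simp
    have honele : (1:ℝ) ≤ (1+a) ^ k₀ := by
      calc (1:ℝ) = 1 ^ k₀ := (Real.one_rpow _).symm
        _ ≤ (1+a) ^ k₀ := Real.rpow_le_rpow zero_le_one (by linarith) (by linarith)
    have hkey0 : (1 + R) ^ θ * a ≤ R := by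
      rw [hpowθ]
      have hsplit : (1+a) ^ (k₀+1) = (1+a) ^ k₀ * (1+a) := by
        rw [Real.rpow_add h1a, Real.rpow_one]
      have : R = (1+a) ^ k₀ * (1+a) - 1 := by rw [hR, hsplit]
      rw [this]
      nlinarith
    -- first exit time
    have hcont : Continuous fun t => ‖γ t - z‖ := (hγ.continuous.sub continuous_const).norm
    set S : Set ℝ := Icc 0 1 ∩ {t | R * ρ z ≤ ‖γ t - z‖} with hS
    have hSne : (1:ℝ) ∈ S := by
      constructor
      · exact ⟨zero_le_one, le_rfl⟩
      · show R * ρ z ≤ ‖γ 1 - z‖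
        rw [h1, ← dist_eq_norm]
        exact hcon.le
    have hSclosed : IsClosed S :=
      isClosed_Icc.inter (isClosed_le continuous_const hcont)
    have hSbdd : BddBelow S := ⟨0, fun t ht => ht.1.1⟩
    set T : ℝ := sInf S with hT
    have hTS : T ∈ S := hSclosed.csInf_mem ⟨1, hSne⟩ hSbdd
    have hT01 : T ∈ Icc (0:ℝ) 1 := hTS.1
    have hTlow : R * ρ z ≤ ‖γ T - z‖ := hTS.2
    have hT0 : 0 < T := by
      rcases lt_or_eq_of_le hT01.1 with h | h
      · exact h
      · exfalso
        rw [← h, h0] at hTlow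
        have hzz : ‖z - z‖ = (0:ℝ) := by simp
        have h2 : R * ρ z ≤ 0 := le_of_le_of_eq hTlow hzz
        nlinarith [hpos z, hRpos]
    have hup : ∀ t ∈ Icc (0:ℝ) T, ‖γ t - z‖ ≤ R * ρ z := by
      intro t ht
      rcases lt_or_eq_of_le ht.2 with hlt | heq
      · have : t ∉ S := notMem_of_lt_csInf hlt hSbdd
        have ht1 : t ∈ Icc (0:ℝ) 1 := ⟨ht.1, hlt.le.trans hT01.2⟩
        by_contra hcc
        push_neg at hcc
        exact this ⟨ht1, hcc.le⟩
      · subst heq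
        -- limit from the left
        have htend : Filter.Tendsto (fun u => ‖γ u - z‖) (nhdsWithin T (Iio T)) (nhds ‖γ T - z‖) :=
          (hcont.tendsto T).mono_left nhdsWithin_le_nhds
        apply le_of_tendsto htend
        filter_upwards [Ioo_mem_nhdsLT_of_mem (⟨hT0, le_refl T⟩ : T ∈ Ioc 0 T)] with u hu
        have : u ∉ S := notMem_of_lt_csInf hu.2 hSbdd
        have hu1 : u ∈ Icc (0:ℝ) 1 := ⟨hu.1.le, hu.2.le.trans hT01.2⟩
        by_contra hcc
        push_neg at hcc
        exact this ⟨hu1, hcc.le⟩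
    set P : ℝ := (1 + R) ^ θ with hP
    have hPpos : 0 < P := Real.rpow_pos_of_pos (by linarith : (0:ℝ) < 1 + R) θ
    have hkey : P * a ≤ R := by rw [hP]; exact hkey0
    set c₀ : ℝ := B₀ * ρ z * P with hc₀
    have hc₀pos : 0 < c₀ :=
      mul_pos (mul_pos (by linarith : (0:ℝ) < B₀) (hpos z)) hPpos
    have hpt : ∀ t ∈ Icc (0:ℝ) T, ‖deriv γ t‖ ≤ c₀ * g t := by
      intro t ht
      have hub := (hρ.2 z (γ t)).2
      have hdist : dist z (γ t) = ‖γ t - z‖ := by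
        rw [dist_eq_norm, norm_sub_rev]
      have hq : 1 + dist z (γ t) / ρ z ≤ 1 + R := by
        have : dist z (γ t) / ρ z ≤ R := by
          rw [div_le_iff₀ (hpos z), hdist]
          exact hup t ht
        linarith
      have hle : (1 + dist z (γ t) / ρ z) ^ (k₀/(k₀+1)) ≤ P := by
        rw [hP, hθ]
        have h00 : (0:ℝ) ≤ dist z (γ t) / ρ z := div_nonneg dist_nonneg (hpos z).le
        exact Real.rpow_le_rpow (by linarith) hq hθ0
      have hργ : ρ (γ t) ≤ c₀ := by
        refine hub.trans ?_
        rw [hc₀]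
        exact mul_le_mul_of_nonneg_left hle
          (mul_pos (by linarith : (0:ℝ) < B₀) (hpos z)).le
      have hgnn : 0 ≤ g t := mul_nonneg (inv_nonneg.2 (hpos _).le) (norm_nonneg _)
      have : ‖deriv γ t‖ = ρ (γ t) * g t := by
        rw [hgdef]
        dsimp only
        rw [← mul_assoc, mul_inv_cancel₀ (hpos (γ t)).ne', one_mul]
      rw [this]
      exact mul_le_mul_of_nonneg_right hργ hgnn
    have hgs1 : IntervalIntegrable g volume 0 T := by
      apply hInt.mono_set
      rw [uIcc_of_le hT01.1, uIcc_of_le zero_le_one]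
      exact Icc_subset_Icc le_rfl hT01.2
    have hgs2 : IntervalIntegrable g volume T 1 := by
      apply hInt.mono_set
      rw [uIcc_of_le hT01.2, uIcc_of_le zero_le_one]
      exact Icc_subset_Icc hT01.1 le_rfl
    have hderivInt : IntervalIntegrable (fun t => ‖deriv γ t‖) volume 0 T :=
      ((hγ.continuous_deriv le_rfl).norm).intervalIntegrable 0 T
    have hstep1 : ∫ t in (0:ℝ)..T, ‖deriv γ t‖ ≤ c₀ * ∫ t in (0:ℝ)..T, g t := by
      rw [← intervalIntegral.integral_const_mul]
      exact intervalIntegral.integral_mono_on hT01.1 hderivInt (hgs1.const_mul c₀) hpt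
    have hstep2 : ‖γ T - z‖ ≤ ∫ t in (0:ℝ)..T, ‖deriv γ t‖ := by
      have hftc : (∫ t in (0:ℝ)..T, deriv γ t) = γ T - γ 0 :=
        intervalIntegral.integral_deriv_eq_sub
          (fun t _ => (hγ.differentiable one_ne_zero) t)
          ((hγ.continuous_deriv le_rfl).intervalIntegrable 0 T)
      calc ‖γ T - z‖ = ‖∫ t in (0:ℝ)..T, deriv γ t‖ := by rw [hftc, h0]
        _ ≤ ∫ t in (0:ℝ)..T, ‖deriv γ t‖ :=
            intervalIntegral.norm_integral_le_integral_norm hT01.1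
    have hstep3 : (∫ t in (0:ℝ)..T, g t) ≤ ∫ t in (0:ℝ)..1, g t := by
      have hsplit := intervalIntegral.integral_add_adjacent_intervals hgs1 hgs2
      have hnn : 0 ≤ ∫ t in T..(1:ℝ), g t :=
        intervalIntegral.integral_nonneg hT01.2
          (fun u _ => mul_nonneg (inv_nonneg.2 (hpos _).le) (norm_nonneg _))
      linarith [hsplit]
    have hfinal : R * ρ z < c₀ * s := by
      calc R * ρ z ≤ ‖γ T - z‖ := hTlow
        _ ≤ ∫ t in (0:ℝ)..T, ‖deriv γ t‖ := hstep2
        _ ≤ c₀ * ∫ t in (0:ℝ)..T, g t := hstep1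
        _ ≤ c₀ * ∫ t in (0:ℝ)..1, g t := by
            apply mul_le_mul_of_nonneg_left hstep3 hc₀pos.le
        _ < c₀ * s := by
            apply mul_lt_mul_of_pos_left hLs hc₀pos
    -- contradiction with hkey
    have hXeq : P * a * ρ z = 2 * (c₀ * s) := by rw [hc₀, ha]; ring
    have h1' : P * a * ρ z ≤ R * ρ z :=
      mul_le_mul_of_nonneg_right hkey (hpos z).le
    have hXpos : 0 < c₀ * s := mul_pos hc₀pos hs
    linarith
  · left
    have h0int : (∫ t in (0:ℝ)..1, g t) = 0 := intervalIntegral.integral_undef hInt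
    have := agmonDist_le hpos (⟨γ, hγ, h0, h1, rfl⟩ : _ ∈ pSet ρ z y)
    rw [h0int] at this
    exact this
lemma bern_upper {x p : ℝ} (hx : 0 ≤ x) (hp : 1 ≤ p) :
    (1 + x) ^ p - 1 ≤ p * x * (1 + x) ^ (p - 1) := by
  have hupos : (0:ℝ) < 1 + x := by linarith
  set W : ℝ := (1+x) ^ (p-1) with hWdef
  have hW : 0 < W := Real.rpow_pos_of_pos hupos _
  have hQW : (1+x) ^ p = W * (1+x) := by
    rw [hWdef, ← Real.rpow_add_one hupos.ne']
    ring_nf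
  have hs : (-1:ℝ) ≤ (1+x)⁻¹ - 1 := by
    have : (0:ℝ) ≤ (1+x)⁻¹ := by positivity
    linarith
  have hB := one_add_mul_self_le_rpow_one_add hs hp
  rw [show (1:ℝ) + ((1+x)⁻¹ - 1) = (1+x)⁻¹ by ring, Real.inv_rpow hupos.le, hQW] at hB
  have hmul := mul_le_mul_of_nonneg_right hB (by positivity : (0:ℝ) ≤ W * (1+x))
  rw [inv_mul_cancel₀ (by positivity : (W*(1+x)) ≠ 0)] at hmul
  have hexp : W*(1+x) + p*W - p*(W*(1+x)) ≤ 1 := by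
    have hid : (1 + p*((1+x)⁻¹ - 1)) * (W*(1+x))
        = W*(1+x) + p*(W*((1+x)*(1+x)⁻¹)) - p*(W*(1+x)) := by ring
    rw [hid, mul_inv_cancel₀ hupos.ne', mul_one] at hmul
    linarith
  rw [hQW]
  nlinarith [hexp]

lemma rpow_le_const_mul_exp {M ε r : ℝ} (hM : 0 ≤ M) (hε : 0 < ε) (hr : 0 < r) :
    r ^ M ≤ (M / ε) ^ M * Real.exp (ε * r) := by
  rcases eq_or_lt_of_le hM with h0 | hMpos
  · rw [← h0]
    simp only [Real.rpow_zero, one_mul]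
    calc (1:ℝ) = Real.exp 0 := Real.exp_zero.symm
      _ ≤ Real.exp (ε * r) := Real.exp_le_exp.2 (by positivity)
  · set t : ℝ := ε * r / M with ht
    have htpos : 0 < t := by positivity
    have hrt : r = (M / ε) * t := by
      rw [ht]; field_simp
    have h1 : r ^ M = (M / ε) ^ M * t ^ M := by
      rw [hrt, Real.mul_rpow (by positivity) htpos.le]
    rw [h1]
    apply mul_le_mul_of_nonneg_left _ (Real.rpow_nonneg (by positivity) _)
    have hlog : Real.log t ≤ t - 1 := Real.log_le_sub_one_of_pos htpos
    have h2 : t ^ M = Real.exp (M * Real.log t) := by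
      rw [← Real.log_rpow htpos, Real.exp_log (Real.rpow_pos_of_pos htpos _)]
    rw [h2]
    apply Real.exp_le_exp.2
    have h3 : M * t = ε * r := by rw [ht]; field_simp
    nlinarith [hlog, hMpos]

lemma growth_bound (B₀ k₀ ε : ℝ) (hB₀ : 1 < B₀) (hk₀ : 1 < k₀) (hε : 0 < ε) (d : ℕ) :
    ∃ C : ℝ, 0 < C ∧ ∀ r : ℝ, 0 < r →
      (((1 + 2*B₀*(3*r)) ^ (k₀+1) - 1) ^ d : ℝ) ≤
        C * Real.exp (ε * r) * (min 1 (r / ((2:ℝ) ^ (k₀+1) * B₀)))^d := by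
  set A : ℝ := (2:ℝ) ^ (k₀+1) * B₀ with hA
  have h2pow : (1:ℝ) ≤ (2:ℝ) ^ (k₀+1) := by
    calc (1:ℝ) = (2:ℝ) ^ (0:ℝ) := by rw [Real.rpow_zero]
      _ ≤ (2:ℝ) ^ (k₀+1) := Real.rpow_le_rpow_of_exponent_le one_le_two (by linarith)
  have hA1 : (1:ℝ) ≤ A := by
    rw [hA]; nlinarith
  have hApos : (0:ℝ) < A := by linarith
  set K₁ : ℝ := (k₀+1) * (1 + 6*B₀) ^ k₀ * (6*B₀) with hK₁
  have hK₁pos : 0 < K₁ := by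
    have := Real.rpow_pos_of_pos (by nlinarith : (0:ℝ) < 1 + 6*B₀) k₀
    rw [hK₁]; positivity
  set B₁ : ℝ := (1 + 6*B₀) ^ (k₀+1) with hB₁
  have hB₁pos : 0 < B₁ := Real.rpow_pos_of_pos (by nlinarith) _
  set M : ℝ := (k₀+1) * (d:ℝ) with hM
  have hM0 : 0 ≤ M := by
    rw [hM]; positivity
  refine ⟨(K₁*A)^d + (B₁*A)^d * (M/ε)^M, by positivity, ?_⟩
  intro r hr
  set δ : ℝ := min 1 (r / A) with hδ
  have hδpos : 0 < δ := lt_min one_pos (by positivity)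
  have hexp1 : (1:ℝ) ≤ Real.exp (ε * r) := by
    rw [← Real.exp_zero]
    apply Real.exp_le_exp.2; positivity
  have hRnn : (0:ℝ) ≤ (1 + 2*B₀*(3*r)) ^ (k₀+1) - 1 := by
    have : (1:ℝ) = 1 ^ (k₀+1) := (Real.one_rpow _).symm
    rw [this]
    have := Real.rpow_le_rpow (zero_le_one) (by nlinarith : (1:ℝ) ≤ 1 + 2*B₀*(3*r)) (by linarith : (0:ℝ) ≤ k₀+1)
    rw [Real.one_rpow] at this ⊢
    linarith
  rcases le_or_gt r 1 with hr1 | hr1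
  · -- small r
    have hδeq : δ = r / A := by
      rw [hδ]
      apply min_eq_right
      calc r / A ≤ r / 1 := by
            apply div_le_div_of_nonneg_left hr.le one_pos hA1
        _ = r := div_one r
        _ ≤ 1 := hr1
    have hbern := bern_upper (show (0:ℝ) ≤ 2*B₀*(3*r) by nlinarith) (by linarith : (1:ℝ) ≤ k₀+1)
    rw [show k₀ + 1 - 1 = k₀ by ring] at hbern
    have hbase : (1 + 2*B₀*(3*r)) ^ k₀ ≤ (1 + 6*B₀) ^ k₀ :=
      Real.rpow_le_rpow (by nlinarith) (by nlinarith) (by linarith)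
    have hR1 : (1 + 2*B₀*(3*r)) ^ (k₀+1) - 1 ≤ K₁ * r := by
      calc (1 + 2*B₀*(3*r)) ^ (k₀+1) - 1 ≤ (k₀+1) * (2*B₀*(3*r)) * (1 + 2*B₀*(3*r)) ^ k₀ :=
            hbern
        _ ≤ (k₀+1) * (2*B₀*(3*r)) * (1 + 6*B₀) ^ k₀ := by
            apply mul_le_mul_of_nonneg_left hbase
            have h1 : (0:ℝ) < 2*B₀ := by linarith
            have h2 : (0:ℝ) < 3*r := by linarith
            nlinarith [mul_pos h1 h2, hk₀]
        _ = K₁ * r := by rw [hK₁]; ring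
    calc (((1 + 2*B₀*(3*r)) ^ (k₀+1) - 1) ^ d : ℝ) ≤ (K₁ * r) ^ d :=
          pow_le_pow_left₀ hRnn hR1 d
      _ = (K₁ * A) ^ d * (r / A) ^ d := by
          rw [← mul_pow]
          congr 1
          field_simp
      _ = (K₁ * A) ^ d * δ ^ d := by rw [hδeq]
      _ ≤ ((K₁*A)^d + (B₁*A)^d * (M/ε)^M) * Real.exp (ε * r) * δ ^ d := by
          have hδd : (0:ℝ) ≤ δ ^ d := by positivity
          have ht1 : (0:ℝ) ≤ (B₁*A)^d * (M/ε)^M := by positivity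
          have ht2 : (0:ℝ) ≤ (K₁*A)^d := by positivity
          have hCE : (K₁*A)^d + (B₁*A)^d * (M/ε)^M
              ≤ ((K₁*A)^d + (B₁*A)^d * (M/ε)^M) * Real.exp (ε * r) :=
            le_mul_of_one_le_right (by linarith) hexp1
          have h7 : (K₁*A)^d ≤ ((K₁*A)^d + (B₁*A)^d * (M/ε)^M) * Real.exp (ε * r) := by
            linarith
          exact mul_le_mul_of_nonneg_right h7 hδd
  · -- large r
    have hδge : A⁻¹ ≤ δ := by
      rw [hδ]
      apply le_min
      · rw [inv_le_one_iff₀]; right; exact hA1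
      · rw [div_eq_mul_inv]
        nlinarith [inv_pos.2 hApos]
    have hR2 : (1 + 2*B₀*(3*r)) ^ (k₀+1) - 1 ≤ B₁ * r ^ (k₀+1) := by
      have hb : 1 + 2*B₀*(3*r) ≤ (1 + 6*B₀) * r := by nlinarith
      calc (1 + 2*B₀*(3*r)) ^ (k₀+1) - 1 ≤ (1 + 2*B₀*(3*r)) ^ (k₀+1) := by linarith
        _ ≤ ((1 + 6*B₀) * r) ^ (k₀+1) :=
            Real.rpow_le_rpow (show (0:ℝ) ≤ 1 + 2*B₀*(3*r) by nlinarith) hb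
              (show (0:ℝ) ≤ k₀+1 by linarith)
        _ = B₁ * r ^ (k₀+1) := by
            rw [hB₁, Real.mul_rpow (show (0:ℝ) ≤ 1 + 6*B₀ by linarith) hr.le]
    have hrM : ((r ^ (k₀+1) : ℝ)) ^ d = r ^ M := by
      rw [hM, ← Real.rpow_natCast (r ^ (k₀+1)) d, ← Real.rpow_mul hr.le]
    have hexpM := rpow_le_const_mul_exp hM0 hε hr
    calc (((1 + 2*B₀*(3*r)) ^ (k₀+1) - 1) ^ d : ℝ) ≤ (B₁ * r ^ (k₀+1)) ^ d :=
          pow_le_pow_left₀ hRnn hR2 d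
      _ = B₁ ^ d * r ^ M := by rw [mul_pow, hrM]
      _ ≤ B₁ ^ d * ((M/ε)^M * Real.exp (ε * r)) := by
          apply mul_le_mul_of_nonneg_left hexpM (by positivity)
      _ = (B₁*A)^d * (M/ε)^M * Real.exp (ε * r) * (A⁻¹) ^ d := by
          have hAA : (A * A⁻¹) ^ d = (1:ℝ) := by
            rw [mul_inv_cancel₀ hApos.ne', one_pow]
          have hid : (B₁*A)^d * (M/ε)^M * Real.exp (ε * r) * (A⁻¹) ^ d
              = B₁ ^ d * ((M/ε)^M * Real.exp (ε * r)) * ((A * A⁻¹) ^ d) := by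
            rw [mul_pow, mul_pow]
            ring
          rw [hid, hAA, mul_one]
      _ ≤ ((K₁*A)^d + (B₁*A)^d * (M/ε)^M) * Real.exp (ε * r) * δ ^ d := by
          have h1 : (A⁻¹) ^ d ≤ δ ^ d := pow_le_pow_left₀ (by positivity) hδge d
          have h2 : (0:ℝ) ≤ (B₁*A)^d * (M/ε)^M := by positivity
          have h3 : (0:ℝ) ≤ (K₁*A)^d := by positivity
          have h4 : (0:ℝ) ≤ Real.exp (ε * r) := by positivity
          have h6 : (B₁*A)^d * (M/ε)^M ≤ (K₁*A)^d + (B₁*A)^d * (M/ε)^M := by linarith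
          have h8 : (B₁*A)^d * (M/ε)^M * Real.exp (ε * r)
              ≤ ((K₁*A)^d + (B₁*A)^d * (M/ε)^M) * Real.exp (ε * r) :=
            mul_le_mul_of_nonneg_right h6 h4
          exact mul_le_mul h8 h1 (by positivity) (by positivity)
theorem stmt9 {d : ℕ} (ρ : EuclideanSpace ℝ (Fin d) → ℝ) (B₀ k₀ : ℝ)
    (hB₀ : 1 < B₀) (hk₀ : 1 < k₀) (hρ : IsCRF ρ B₀ k₀)
    (c₁ c₂ : ℝ) (hc₂ : 0 < c₂) (hc : 2 * c₂ < c₁) :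
    ∃ C : ℝ, 0 < C ∧ ∀ (f : EuclideanSpace ℝ (Fin d) → ℝ) (x : EuclideanSpace ℝ (Fin d)),
      aMaxUnc ρ c₁ f x ≤ ENNReal.ofReal C * aMax ρ c₂ f x := by
  have hpos := hρ.1
  set ε : ℝ := c₁ - 2*c₂ with hε
  have hεpos : 0 < ε := by rw [hε]; linarith
  obtain ⟨C₀, hC₀pos, hC₀⟩ := growth_bound B₀ k₀ ε hB₀ hk₀ hεpos d
  refine ⟨1 + C₀, by linarith, ?_⟩
  intro f x
  rw [aMaxUnc]
  refine iSup_le fun z => iSup_le fun r => iSup_le fun hr => iSup_le fun hzx => ?_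
  set V : ℝ≥0∞ := volume (agmonBall ρ z r) with hVdef
  set N : ℝ≥0∞ := ∫⁻ y in agmonBall ρ z r, ENNReal.ofReal |f y| with hNdef
  set N₂ : ℝ≥0∞ := ∫⁻ y in agmonBall ρ x (2*r), ENNReal.ofReal |f y| with hN₂def
  set V₂ : ℝ≥0∞ := volume (agmonBall ρ x (2*r)) with hV₂def
  set E₁ : ℝ≥0∞ := ENNReal.ofReal (Real.exp (c₁ * r)) with hE₁def
  set E₂ : ℝ≥0∞ := ENNReal.ofReal (Real.exp (c₂ * (2*r))) with hE₂def
  set μb : ℝ≥0∞ := volume (Metric.ball (0 : EuclideanSpace ℝ (Fin d)) 1) with hμbdef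
  set δ : ℝ := min 1 (r / ((2:ℝ) ^ (k₀+1) * B₀)) with hδdef
  set R₃ : ℝ := (1 + 2*B₀*(3*r)) ^ (k₀+1) - 1 with hR₃def
  have hδpos : 0 < δ := by
    have : (0:ℝ) < (2:ℝ) ^ (k₀+1) := Real.rpow_pos_of_pos two_pos _
    have hB0 : (0:ℝ) < B₀ := by linarith
    exact lt_min one_pos (by positivity)
  have hR₃nn : 0 ≤ R₃ := by
    rw [hR₃def]
    have h1 : (1:ℝ) ^ (k₀+1) ≤ (1 + 2*B₀*(3*r)) ^ (k₀+1) :=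
      Real.rpow_le_rpow zero_le_one (by nlinarith) (by linarith)
    rw [Real.one_rpow] at h1
    linarith
  have hsub1 : agmonBall ρ z r ⊆ agmonBall ρ x (2*r) := ball_subset_double hpos hzx
  have hsub2 : agmonBall ρ x (2*r) ⊆ agmonBall ρ z (3*r) := double_subset_triple hpos hzx
  have hdich : agmonBall ρ z (3*r) ⊆ agmonBall ρ z r ∪ closedBall z (R₃ * ρ z) := by
    intro y hy
    rcases exit_bound hB₀ hk₀ hρ (by linarith : (0:ℝ) < 3*r) hy with h | h
    · left
      show agmonDist ρ z y < r
      linarith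
    · right
      rw [mem_closedBall, dist_eq_norm]
      rw [dist_eq_norm] at h
      exact h
  have hWvol : volume (closedBall z (R₃ * ρ z)) = ENNReal.ofReal ((R₃ * ρ z)^d) * μb := by
    rw [Measure.addHaar_closedBall volume z (mul_nonneg hR₃nn (hpos z).le)]
    · rw [hμbdef, finrank_euclideanSpace_fin]
  have hVlow : ENNReal.ofReal ((δ * ρ z)^d) * μb ≤ V := by
    have hsub := eucBall_subset_agmonBall hB₀ hk₀ hρ hr (z := z)
    have heq : volume (closedBall z (δ * ρ z)) = ENNReal.ofReal ((δ * ρ z)^d) * μb := by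
      rw [Measure.addHaar_closedBall volume z
        (by have := (hpos z).le; positivity : (0:ℝ) ≤ δ * ρ z)]
      rw [hμbdef, finrank_euclideanSpace_fin]
    rw [← heq, hVdef]
    exact measure_mono hsub
  -- real inequality
  have hreal : (R₃ * ρ z)^d ≤ (C₀ * Real.exp (ε * r)) * ((δ * ρ z)^d) := by
    have h1 := hC₀ r hr
    rw [← hR₃def, ← hδdef] at h1
    have h2 : (R₃ * ρ z)^d = R₃^d * (ρ z)^d := mul_pow _ _ _
    have h3 : (δ * ρ z)^d = δ^d * (ρ z)^d := mul_pow _ _ _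
    rw [h2, h3]
    calc R₃^d * (ρ z)^d ≤ (C₀ * Real.exp (ε * r) * δ^d) * (ρ z)^d :=
          mul_le_mul_of_nonneg_right h1 (by have := (hpos z).le; positivity)
      _ = C₀ * Real.exp (ε * r) * (δ^d * (ρ z)^d) := by ring
  have hWle : volume (closedBall z (R₃ * ρ z)) ≤ ENNReal.ofReal (C₀ * Real.exp (ε * r)) * V := by
    rw [hWvol]
    calc ENNReal.ofReal ((R₃ * ρ z)^d) * μb
        ≤ ENNReal.ofReal ((C₀ * Real.exp (ε * r)) * ((δ * ρ z)^d)) * μb := by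
          exact mul_le_mul_left (ENNReal.ofReal_le_ofReal hreal) μb
      _ = ENNReal.ofReal (C₀ * Real.exp (ε * r)) * (ENNReal.ofReal ((δ * ρ z)^d) * μb) := by
          rw [ENNReal.ofReal_mul (by positivity), mul_assoc]
      _ ≤ ENNReal.ofReal (C₀ * Real.exp (ε * r)) * V :=
          mul_le_mul_right hVlow _
  have hV₂le : V₂ ≤ (1 + ENNReal.ofReal (C₀ * Real.exp (ε * r))) * V := by
    calc V₂ ≤ volume (agmonBall ρ z (3*r)) := measure_mono hsub2
      _ ≤ volume (agmonBall ρ z r ∪ closedBall z (R₃ * ρ z)) := measure_mono hdich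
      _ ≤ V + volume (closedBall z (R₃ * ρ z)) := measure_union_le _ _
      _ ≤ V + ENNReal.ofReal (C₀ * Real.exp (ε * r)) * V := add_le_add_right hWle V
      _ = (1 + ENNReal.ofReal (C₀ * Real.exp (ε * r))) * V := by
          rw [add_mul, one_mul]
  have hkey : V₂ * E₂ ≤ ENNReal.ofReal (1 + C₀) * (V * E₁) := by
    have hexp1 : (1:ℝ) ≤ Real.exp (ε * r) := by
      rw [← Real.exp_zero]
      exact Real.exp_le_exp.2 (by positivity)
    have h1 : (1:ℝ≥0∞) + ENNReal.ofReal (C₀ * Real.exp (ε * r))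
        ≤ ENNReal.ofReal ((1 + C₀) * Real.exp (ε * r)) := by
      rw [← ENNReal.ofReal_one, ← ENNReal.ofReal_add zero_le_one (by positivity)]
      exact ENNReal.ofReal_le_ofReal (by nlinarith)
    have h2 : ENNReal.ofReal ((1 + C₀) * Real.exp (ε * r)) * E₂
        = ENNReal.ofReal (1 + C₀) * E₁ := by
      rw [hE₂def, hE₁def, ← ENNReal.ofReal_mul (by positivity), ← ENNReal.ofReal_mul (by linarith)]
      congr 1
      rw [mul_assoc, ← Real.exp_add]
      congr 2
      rw [hε]; ring
    calc V₂ * E₂ ≤ ((1 + ENNReal.ofReal (C₀ * Real.exp (ε * r))) * V) * E₂ :=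
          mul_le_mul_left hV₂le E₂
      _ ≤ (ENNReal.ofReal ((1 + C₀) * Real.exp (ε * r)) * V) * E₂ :=
          mul_le_mul_left (mul_le_mul_left h1 V) E₂
      _ = (ENNReal.ofReal ((1 + C₀) * Real.exp (ε * r)) * E₂) * V := by ring
      _ = (ENNReal.ofReal (1 + C₀) * E₁) * V := by rw [h2]
      _ = ENNReal.ofReal (1 + C₀) * (V * E₁) := by ring
  have hterm : N₂ / (V₂ * E₂) ≤ aMax ρ c₂ f x := by
    rw [aMax]
    exact le_iSup_of_le (2*r) (le_iSup_of_le (by linarith) le_rfl)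
  have hCne0 : ENNReal.ofReal (1 + C₀) ≠ 0 := by
    simp only [ne_eq, ENNReal.ofReal_eq_zero, not_le]
    linarith
  have hCnetop : ENNReal.ofReal (1 + C₀) ≠ ⊤ := ENNReal.ofReal_ne_top
  calc N / (V * E₁) ≤ N₂ / (V * E₁) :=
        ENNReal.div_le_div_right (lintegral_mono_set hsub1) _
    _ = (ENNReal.ofReal (1 + C₀) * N₂) / (ENNReal.ofReal (1 + C₀) * (V * E₁)) :=
        (ENNReal.mul_div_mul_left _ _ hCne0 hCnetop).symm
    _ ≤ (ENNReal.ofReal (1 + C₀) * N₂) / (V₂ * E₂) :=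
        ENNReal.div_le_div_left hkey _
    _ = ENNReal.ofReal (1 + C₀) * (N₂ / (V₂ * E₂)) := by
        rw [mul_div_assoc]
    _ ≤ ENNReal.ofReal (1 + C₀) * aMax ρ c₂ f x := mul_le_mul_right hterm _
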